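/- Let 1 < p < 2 and μ₁(p) = inf over u ∈ W₂ \ {0} of [ (1/p)∫_Ω|∇u|^p + (1/2)∫_Ω|∇u|² ] / [ (1/2)∫_Ω a u² + (1/2)∫_{∂Ω} b u² dσ ], where W₂ = {u ∈ W^{1,2}(Ω) : ∫_Ω a u + ∫_{∂Ω} b u dσ = 0}, and ν₁ = inf over u ∈ W₂ \ {0} of ∫_Ω|∇u|² / (∫_Ω a u² + ∫_{∂Ω} b u² dσ). Then μ₁(p) = ν₁. In particular μ₁(p) does not depend on p for 1 < p < 2. -/

import Mathlib

open MeasureTheory Filter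
open scoped RealInnerProductSpace ENNReal Topology NNReal

noncomputable section

variable {N : ℕ}

/-- Membership in the Sobolev space `W^{1,p}` with respect to the measure `μ`
(typically `volume.restrict Ω`): both `u` and its gradient are in `L^p(μ)`. -/
def MemW1p (p : ℝ) (μ : Measure (EuclideanSpace ℝ (Fin N)))
    (u : EuclideanSpace ℝ (Fin N) → ℝ) : Prop :=
  MemLp u (ENNReal.ofReal p) μ ∧ MemLp (fun x => gradient u x) (ENNReal.ofReal p) μ

/-- The `W^{1,p}` norm of `u`. -/
def W1pNorm (p : ℝ) (μ : Measure (EuclideanSpace ℝ (Fin N)))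
    (u : EuclideanSpace ℝ (Fin N) → ℝ) : ℝ :=
  (∫ x, |u x| ^ p ∂μ) ^ (1 / p) + (∫ x, ‖gradient u x‖ ^ p ∂μ) ^ (1 / p)

/-- The weak formulation of the eigenvalue equation for the `(p,2)`-Laplacian with
Steklov-type boundary condition: `u` satisfies the equation tested against all
`φ ∈ W^{1,r}`. -/
def WeakEq (p r : ℝ) (μ σ : Measure (EuclideanSpace ℝ (Fin N)))
    (a b : EuclideanSpace ℝ (Fin N) → ℝ) (lam : ℝ)
    (u : EuclideanSpace ℝ (Fin N) → ℝ) : Prop :=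
  ∀ φ : EuclideanSpace ℝ (Fin N) → ℝ, MemW1p r μ φ →
    (∫ x, ‖gradient u x‖ ^ (p - 2) * ⟪gradient u x, gradient φ x⟫ ∂μ)
      + (∫ x, ⟪gradient u x, gradient φ x⟫ ∂μ)
    = lam * (∫ x, a x * u x * φ x ∂μ) + lam * (∫ x, b x * u x * φ x ∂σ)

/-- `λ` is an eigenvalue (with eigenfunctions/test functions in `W^{1,r}`). -/
def IsEigen (p r : ℝ) (μ σ : Measure (EuclideanSpace ℝ (Fin N)))
    (a b : EuclideanSpace ℝ (Fin N) → ℝ) (lam : ℝ) : Prop :=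
  ∃ u : EuclideanSpace ℝ (Fin N) → ℝ,
    MemW1p r μ u ∧ ¬ u =ᵐ[μ] 0 ∧ WeakEq p r μ σ a b lam u

/-- The linear constraint defining the hyperplane `𝒲`. -/
def Cst (μ σ : Measure (EuclideanSpace ℝ (Fin N)))
    (a b u : EuclideanSpace ℝ (Fin N) → ℝ) : Prop :=
  (∫ x, a x * u x ∂μ) + (∫ x, b x * u x ∂σ) = 0

/-- The energy functional `I_λ`. -/
def Ifun (p : ℝ) (μ σ : Measure (EuclideanSpace ℝ (Fin N)))
    (a b : EuclideanSpace ℝ (Fin N) → ℝ) (lam : ℝ)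
    (u : EuclideanSpace ℝ (Fin N) → ℝ) : ℝ :=
  (1 / p) * (∫ x, ‖gradient u x‖ ^ p ∂μ) + (1 / 2) * (∫ x, ‖gradient u x‖ ^ (2 : ℝ) ∂μ)
    - (lam / 2) * (∫ x, a x * u x ^ (2 : ℕ) ∂μ) - (lam / 2) * (∫ x, b x * u x ^ (2 : ℕ) ∂σ)

/-- The Rayleigh quotient defining `λ₁(p)` resp. `μ₁(p)`. -/
def Rayleigh (p : ℝ) (μ σ : Measure (EuclideanSpace ℝ (Fin N)))
    (a b : EuclideanSpace ℝ (Fin N) → ℝ) (u : EuclideanSpace ℝ (Fin N) → ℝ) : ℝ :=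
  ((1 / p) * (∫ x, ‖gradient u x‖ ^ p ∂μ) + (1 / 2) * (∫ x, ‖gradient u x‖ ^ (2 : ℝ) ∂μ)) /
    ((1 / 2) * (∫ x, a x * u x ^ (2 : ℕ) ∂μ) + (1 / 2) * (∫ x, b x * u x ^ (2 : ℕ) ∂σ))

/-- The set of Rayleigh quotients over `𝒲_r \ {0}` (with positive denominator),
whose infimum is `λ₁(p)` (for `r = p > 2`) resp. `μ₁(p)` (for `r = 2`, `1 < p < 2`). -/
def RayleighSet (p r : ℝ) (μ σ : Measure (EuclideanSpace ℝ (Fin N)))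
    (a b : EuclideanSpace ℝ (Fin N) → ℝ) : Set ℝ :=
  {t : ℝ | ∃ u : EuclideanSpace ℝ (Fin N) → ℝ, MemW1p r μ u ∧ ¬ u =ᵐ[μ] 0 ∧
    Cst μ σ a b u ∧
    0 < (1 / 2) * (∫ x, a x * u x ^ (2 : ℕ) ∂μ) + (1 / 2) * (∫ x, b x * u x ^ (2 : ℕ) ∂σ) ∧
    t = Rayleigh p μ σ a b u}

/-- Membership in the Nehari manifold `𝒩_λ ⊂ 𝒲₂ \ {0}`. -/
def Nehari (p : ℝ) (μ σ : Measure (EuclideanSpace ℝ (Fin N)))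
    (a b : EuclideanSpace ℝ (Fin N) → ℝ) (lam : ℝ)
    (u : EuclideanSpace ℝ (Fin N) → ℝ) : Prop :=
  MemW1p 2 μ u ∧ ¬ u =ᵐ[μ] 0 ∧ Cst μ σ a b u ∧
    (∫ x, ‖gradient u x‖ ^ p ∂μ) + (∫ x, ‖gradient u x‖ ^ (2 : ℝ) ∂μ)
      = lam * (∫ x, a x * u x ^ (2 : ℕ) ∂μ) + lam * (∫ x, b x * u x ^ (2 : ℕ) ∂σ)

/-- The set of simplified Rayleigh quotients whose infimum is `ν₁`. -/
def NuSet (r : ℝ) (μ σ : Measure (EuclideanSpace ℝ (Fin N)))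
    (a b : EuclideanSpace ℝ (Fin N) → ℝ) : Set ℝ :=
  {t : ℝ | ∃ u : EuclideanSpace ℝ (Fin N) → ℝ, MemW1p r μ u ∧ ¬ u =ᵐ[μ] 0 ∧
    Cst μ σ a b u ∧
    0 < (∫ x, a x * u x ^ 2 ∂μ) + (∫ x, b x * u x ^ 2 ∂σ) ∧
    t = (∫ x, ‖gradient u x‖ ^ (2 : ℝ) ∂μ) /
      ((∫ x, a x * u x ^ 2 ∂μ) + (∫ x, b x * u x ^ 2 ∂σ))}

lemma gradient_const_mul' (t : ℝ) (u : EuclideanSpace ℝ (Fin N) → ℝ)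
    (x : EuclideanSpace ℝ (Fin N)) :
    gradient (fun y => t * u y) x = t • gradient u x := by
  rcases eq_or_ne t 0 with rfl | ht
  · simp [gradient, fderiv_const]
  by_cases hd : DifferentiableAt ℝ u x
  · rw [gradient, gradient, fderiv_const_mul hd t]
    exact map_smul ((InnerProductSpace.toDual ℝ (EuclideanSpace ℝ (Fin N))).symm.toLinearEquiv) t _
  · have hd2 : ¬ DifferentiableAt ℝ (fun y => t * u y) x := by
      intro h
      have := h.const_mul t⁻¹
      simp only [← mul_assoc, inv_mul_cancel₀ ht, one_mul] at this
      exact hd this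
    rw [gradient, gradient, fderiv_zero_of_not_differentiableAt hd,
      fderiv_zero_of_not_differentiableAt hd2, map_zero, smul_zero]

lemma intA_nonneg (μ : Measure (EuclideanSpace ℝ (Fin N))) (u : EuclideanSpace ℝ (Fin N) → ℝ)
    (p : ℝ) : 0 ≤ ∫ x, ‖gradient u x‖ ^ p ∂μ :=
  integral_nonneg fun x => Real.rpow_nonneg (norm_nonneg _) p

/-- Key scaling lemma: membership of rescaled Rayleigh quotient. -/
lemma key (p : ℝ) (hp1 : 1 < p) (hp2 : p < 2)
    (μ σ : Measure (EuclideanSpace ℝ (Fin N)))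
    (a b u : EuclideanSpace ℝ (Fin N) → ℝ)
    (hu : MemW1p 2 μ u) (hu0 : ¬ u =ᵐ[μ] 0) (hc : Cst μ σ a b u)
    (hD : 0 < (∫ x, a x * u x ^ 2 ∂μ) + (∫ x, b x * u x ^ 2 ∂σ))
    (t : ℝ) (ht : 0 < t) :
    (2 * (∫ x, ‖gradient u x‖ ^ p ∂μ) /
        (p * ((∫ x, a x * u x ^ 2 ∂μ) + (∫ x, b x * u x ^ 2 ∂σ)))) * t ^ (p - 2)
      + (∫ x, ‖gradient u x‖ ^ (2 : ℝ) ∂μ) /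
        ((∫ x, a x * u x ^ 2 ∂μ) + (∫ x, b x * u x ^ 2 ∂σ))
      ∈ RayleighSet p 2 μ σ a b := by
  have ht' : t ≠ 0 := ht.ne'
  set v : EuclideanSpace ℝ (Fin N) → ℝ := fun y => t * u y with hv
  have hgrad : ∀ x, gradient v x = t • gradient u x := gradient_const_mul' t u
  refine ⟨v, ⟨hu.1.const_mul t, ?_⟩, ?_, ?_, ?_, ?_⟩
  · have : (fun x => gradient v x) = fun x => t • gradient u x := funext hgrad
    rw [this]; exact hu.2.const_smul t
  · intro h
    apply hu0
    filter_upwards [h] with x hx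
    have : t * u x = 0 := hx
    simpa [ht'] using this
  · unfold Cst at hc ⊢
    have h1 : ∀ x, a x * v x = t * (a x * u x) := fun x => by simp only [hv]; ring
    have h2 : ∀ x, b x * v x = t * (b x * u x) := fun x => by simp only [hv]; ring
    simp only [h1, h2, integral_const_mul]
    rw [← mul_add, hc, mul_zero]
  · have h1 : ∀ x, a x * v x ^ (2:ℕ) = t ^ 2 * (a x * u x ^ (2:ℕ)) := fun x => by
      simp only [hv]; ring
    have h2 : ∀ x, b x * v x ^ (2:ℕ) = t ^ 2 * (b x * u x ^ (2:ℕ)) := fun x => by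
      simp only [hv]; ring
    simp only [h1, h2, integral_const_mul]
    have ht2 : 0 < t ^ 2 := by positivity
    nlinarith
  · unfold Rayleigh
    have h1 : ∀ x, a x * v x ^ (2:ℕ) = t ^ 2 * (a x * u x ^ (2:ℕ)) := fun x => by
      simp only [hv]; ring
    have h2 : ∀ x, b x * v x ^ (2:ℕ) = t ^ 2 * (b x * u x ^ (2:ℕ)) := fun x => by
      simp only [hv]; ring
    have h3 : ∀ x, ‖gradient v x‖ ^ p = t ^ p * ‖gradient u x‖ ^ p := fun x => by
      rw [hgrad, norm_smul, Real.norm_eq_abs, abs_of_pos ht,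
        Real.mul_rpow ht.le (norm_nonneg _)]
    have h4 : ∀ x, ‖gradient v x‖ ^ (2:ℝ) = t ^ (2:ℝ) * ‖gradient u x‖ ^ (2:ℝ) := fun x => by
      rw [hgrad, norm_smul, Real.norm_eq_abs, abs_of_pos ht,
        Real.mul_rpow ht.le (norm_nonneg _)]
    simp only [h1, h2, h3, h4, integral_const_mul]
    have hpt : t ^ p = t ^ (p - 2) * t ^ 2 := by
      rw [show (t:ℝ) ^ (2:ℕ) = t ^ (2:ℝ) by
        rw [show ((2:ℝ)) = ((2:ℕ):ℝ) by norm_num, Real.rpow_natCast],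
        ← Real.rpow_add ht]
      ring_nf
    have ht22 : t ^ (2:ℝ) = t ^ (2:ℕ) := by
      rw [show ((2:ℝ)) = ((2:ℕ):ℝ) by norm_num, Real.rpow_natCast]
    rw [hpt, ht22]
    have hp0 : p ≠ 0 := by linarith
    have hD' : (∫ x, a x * u x ^ 2 ∂μ) + (∫ x, b x * u x ^ 2 ∂σ) ≠ 0 := hD.ne'
    have ht2 : (0:ℝ) < t ^ (2:ℕ) := by positivity
    set A := ∫ x, ‖gradient u x‖ ^ p ∂μ
    set B := ∫ x, ‖gradient u x‖ ^ (2:ℝ) ∂μ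
    set X := ∫ x, a x * u x ^ 2 ∂μ
    set Y := ∫ x, b x * u x ^ 2 ∂σ
    have hden : (0:ℝ) < 1 / 2 * (t ^ (2:ℕ) * X) + 1 / 2 * (t ^ (2:ℕ) * Y) := by nlinarith
    rw [eq_div_iff hden.ne']
    field_simp

lemma ray_nonneg (p : ℝ) (hp1 : 1 < p)
    (μ σ : Measure (EuclideanSpace ℝ (Fin N))) (a b : EuclideanSpace ℝ (Fin N) → ℝ)
    {r : ℝ} (hr : r ∈ RayleighSet p 2 μ σ a b) : 0 ≤ r := by
  obtain ⟨u, _, _, _, hpos, rfl⟩ := hr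
  have hA := intA_nonneg μ u p
  have hB := intA_nonneg μ u 2
  have hp0 : (0:ℝ) ≤ 1 / p := by positivity
  exact div_nonneg (by nlinarith) hpos.le

lemma nu_nonneg (μ σ : Measure (EuclideanSpace ℝ (Fin N)))
    (a b : EuclideanSpace ℝ (Fin N) → ℝ)
    {s : ℝ} (hs : s ∈ NuSet 2 μ σ a b) : 0 ≤ s := by
  obtain ⟨u, _, _, _, hpos, rfl⟩ := hs
  exact div_nonneg (intA_nonneg μ u 2) hpos.le

lemma main_eq (p : ℝ) (hp1 : 1 < p) (hp2 : p < 2)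
    (μ σ : Measure (EuclideanSpace ℝ (Fin N))) (a b : EuclideanSpace ℝ (Fin N) → ℝ) :
    sInf (RayleighSet p 2 μ σ a b) = sInf (NuSet 2 μ σ a b) := by
  have hRtoN : ∀ r ∈ RayleighSet p 2 μ σ a b, ∃ s ∈ NuSet 2 μ σ a b, s ≤ r := by
    rintro r ⟨u, hu, hu0, hcst, hpos, rfl⟩
    have hD : 0 < (∫ x, a x * u x ^ 2 ∂μ) + (∫ x, b x * u x ^ 2 ∂σ) := by linarith
    refine ⟨_, ⟨u, hu, hu0, hcst, hD, rfl⟩, ?_⟩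
    unfold Rayleigh
    have hA := intA_nonneg μ u p
    rw [div_le_div_iff₀ hD hpos]
    have h1 : (0:ℝ) ≤ (1 / p) *
        ((∫ x, ‖gradient u x‖ ^ p ∂μ) *
          ((∫ x, a x * u x ^ 2 ∂μ) + (∫ x, b x * u x ^ 2 ∂σ))) := by positivity
    nlinarith [mul_nonneg hA hD.le]
  have hNtoR : ∀ s ∈ NuSet 2 μ σ a b, ∀ ε > (0:ℝ),
      ∃ r ∈ RayleighSet p 2 μ σ a b, r ≤ s + ε := by
    rintro s ⟨u, hu, hu0, hcst, hD, rfl⟩ ε hε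
    set A := ∫ x, ‖gradient u x‖ ^ p ∂μ with hA'
    set D := (∫ x, a x * u x ^ 2 ∂μ) + (∫ x, b x * u x ^ 2 ∂σ) with hDdef
    have hA : 0 ≤ A := intA_nonneg μ u p
    have hpD : 0 < p * D := mul_pos (by linarith) hD
    set C := 2 * A / (p * D) with hC'
    have hC : 0 ≤ C := div_nonneg (by linarith) hpD.le
    set c := ε / (C + 1) with hcdef
    have hcpos : 0 < c := div_pos hε (by linarith)
    set t := c ^ (p - 2)⁻¹ with ht'
    have ht : 0 < t := Real.rpow_pos_of_pos hcpos _
    have hts : t ^ (p - 2) = c := by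
      rw [ht', ← Real.rpow_mul hcpos.le,
        inv_mul_cancel₀ (sub_ne_zero.mpr (by linarith : p ≠ 2)), Real.rpow_one]
    refine ⟨_, key p hp1 hp2 μ σ a b u hu hu0 hcst hD t ht, ?_⟩
    rw [hts]
    have h1 : C * c = (C / (C + 1)) * ε := by
      rw [hcdef]; ring
    have h2 : C / (C + 1) ≤ 1 := by
      rw [div_le_one (by linarith)]; linarith
    have h3 : C * c ≤ ε := by
      rw [h1]
      calc (C / (C + 1)) * ε ≤ 1 * ε := by
            apply mul_le_mul_of_nonneg_right h2 hε.le
        _ = ε := one_mul ε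
    linarith
  by_cases hne : (NuSet 2 μ σ a b).Nonempty
  · have hNbdd : BddBelow (NuSet 2 μ σ a b) := ⟨0, fun s hs => nu_nonneg μ σ a b hs⟩
    have hRbdd : BddBelow (RayleighSet p 2 μ σ a b) :=
      ⟨0, fun r hr => ray_nonneg p hp1 μ σ a b hr⟩
    obtain ⟨s₀, hs₀⟩ := hne
    obtain ⟨r₀, hr₀, -⟩ := hNtoR s₀ hs₀ 1 one_pos
    apply le_antisymm
    · apply le_csInf ⟨s₀, hs₀⟩
      intro s hs
      refine le_of_forall_pos_le_add fun ε hε => ?_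
      obtain ⟨r, hr, hle⟩ := hNtoR s hs ε hε
      exact (csInf_le hRbdd hr).trans hle
    · apply le_csInf ⟨r₀, hr₀⟩
      intro r hr
      obtain ⟨s, hs, hle⟩ := hRtoN r hr
      exact (csInf_le hNbdd hs).trans hle
  · rw [Set.not_nonempty_iff_eq_empty] at hne
    have hR : RayleighSet p 2 μ σ a b = ∅ := by
      rw [Set.eq_empty_iff_forall_notMem]
      intro r hr
      obtain ⟨s, hs, -⟩ := hRtoN r hr
      rw [hne] at hs
      exact hs
    rw [hne, hR]

/-- for 1 < p < 2, μ₁(p) = ν₁; in particular μ₁(p) does not depend on p. -/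
theorem stmt_11 (p : ℝ) (hp1 : 1 < p) (hp2 : p < 2)
    (Ω : Set (EuclideanSpace ℝ (Fin N))) (hΩo : IsOpen Ω) (hΩb : Bornology.IsBounded Ω)
    (μ σ : Measure (EuclideanSpace ℝ (Fin N))) [IsFiniteMeasure σ]
    (hμ : μ = MeasureTheory.volume.restrict Ω) (hσfr : σ (frontier Ω)ᶜ = 0)
    (a b : EuclideanSpace ℝ (Fin N) → ℝ)
    (ha0 : ∀ᵐ x ∂μ, 0 ≤ a x) (hb0 : ∀ᵐ x ∂σ, 0 ≤ b x)
    (haInt : Integrable a μ) (hbInt : Integrable b σ)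
    (hab : 0 < (∫ x, a x ∂μ) + (∫ x, b x ∂σ)) :
    sInf (RayleighSet p 2 μ σ a b) = sInf (NuSet 2 μ σ a b) ∧
    (∀ q : ℝ, 1 < q → q < 2 →
      sInf (RayleighSet p 2 μ σ a b) = sInf (RayleighSet q 2 μ σ a b)) :=
  ⟨main_eq p hp1 hp2 μ σ a b, fun q hq1 hq2 =>
    (main_eq p hp1 hp2 μ σ a b).trans (main_eq q hq1 hq2 μ σ a b).symm⟩
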